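/- The family of behaviors of deterministic splitters is not closed under complementation: over the alphabet A = {a,b} (a ≠ b), the set L = {(b, aⁿ, baⁿ) : n ∈ ℕ} ⊆ U is the behavior of a deterministic splitter with finitely many states, but its complement U \ L is not the behavior of any deterministic splitter. -/

import Mathlib

/-- Words over the alphabet `A`, i.e. elements of the free monoid `A*`. -/
abbrev Word (A : Type) := List A

/-- The generating set `G = {(a,ε,a) : a ∈ A} ∪ {(ε,a,a) : a ∈ A}` of the
Shuffling Monoid. -/
def genG (A : Type) : Set (Word A × Word A × Word A) :=
  {g | ∃ a : A, g = ([a], [], [a]) ∨ g = ([], [a], [a])}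

/-- Componentwise product (concatenation) of a list of triples of words. -/
def prodTriple {A : Type} (ls : List (Word A × Word A × Word A)) :
    Word A × Word A × Word A :=
  ((ls.map fun l => l.1).flatten, (ls.map fun l => l.2.1).flatten,
    (ls.map fun l => l.2.2).flatten)

/-- The Shuffling Monoid `U`: the submonoid of `A* × A* × A*` generated by `G`,
described as the set of all products of finite sequences of generators. -/
def shuffleU (A : Type) : Set (Word A × Word A × Word A) :=
  {m | ∃ ls : List (Word A × Word A × Word A), (∀ l ∈ ls, l ∈ genG A) ∧ prodTriple ls = m}

/-- A spliffer (equivalently, splitter) over `A`: a finite automaton whose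
transitions are labeled by elements of `G`. -/
structure Spliffer (A : Type) where
  Q : Type
  finQ : Finite Q
  E : Q → (Word A × Word A × Word A) → Q → Prop
  I : Set Q
  T : Set Q
  labels_mem : ∀ {q l q'}, E q l q' → l ∈ genG A

/-- Paths in a spliffer, recording the sequence of labels. -/
inductive Spliffer.Path {A : Type} (S : Spliffer A) :
    S.Q → List (Word A × Word A × Word A) → S.Q → Prop
  | nil (q : S.Q) : Spliffer.Path S q [] q
  | cons {q q' q'' : S.Q} {l : Word A × Word A × Word A}
      {ls : List (Word A × Word A × Word A)} :
      S.E q l q' → Spliffer.Path S q' ls q'' → Spliffer.Path S q (l :: ls) q''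

/-- The behavior `|S|` of a spliffer: products of the label sequences of all
successful runs. -/
def Spliffer.behavior {A : Type} (S : Spliffer A) : Set (Word A × Word A × Word A) :=
  {m | ∃ q ∈ S.I, ∃ q' ∈ S.T, ∃ ls, S.Path q ls q' ∧ prodTriple ls = m}

/-- A splitter is deterministic if it has a single initial state, for every state
and input letter there is at most one outgoing transition reading that letter,
and all transitions leaving a given state write to the same tape. -/
def Spliffer.Deterministic {A : Type} (S : Spliffer A) : Prop :=
  (∃! i, i ∈ S.I) ∧
  (∀ ⦃q l₁ q₁ l₂ q₂⦄, S.E q l₁ q₁ → S.E q l₂ q₂ → l₁.2.2 = l₂.2.2 → l₁ = l₂ ∧ q₁ = q₂) ∧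
  (∀ ⦃q l₁ q₁ l₂ q₂⦄, S.E q l₁ q₁ → S.E q l₂ q₂ →
    (l₁.1 = [] ∧ l₂.1 = []) ∨ (l₁.2.1 = [] ∧ l₂.2.1 = []))

/-- The set `L = {(b, aⁿ, baⁿ) : n ∈ ℕ}`. -/
def setLb {A : Type} (a b : A) : Set (Word A × Word A × Word A) :=
  {x | ∃ n : ℕ, x = ([b], List.replicate n a, b :: List.replicate n a)}

/- auxiliary -/

def mySpl {A : Type} (a b : A) : Spliffer A where
  Q := Bool
  finQ := inferInstance
  E q l q' := (q = false ∧ l = ([b],[],[b]) ∧ q' = true) ∨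
              (q = true ∧ l = ([],[a],[a]) ∧ q' = true)
  I := {false}
  T := {true}
  labels_mem := by
    rintro q l q' (⟨_, rfl, _⟩ | ⟨_, rfl, _⟩)
    · exact ⟨b, Or.inl rfl⟩
    · exact ⟨a, Or.inr rfl⟩

lemma flat_rep {A : Type} (x : A) : ∀ n, (List.replicate n [x]).flatten = List.replicate n x := by
  intro n; induction n with
  | zero => simp
  | succ n ih => simp [List.replicate_succ, ih]

lemma prodRep {A : Type} (a b : A) (n : ℕ) :
    prodTriple (([b],[],[b]) :: List.replicate n (([],[a],[a]) : Word A × Word A × Word A))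
      = ([b], List.replicate n a, b :: List.replicate n a) := by
  simp [prodTriple, List.map_replicate, flat_rep]

lemma path_from_true {A : Type} (a b : A) :
    ∀ (ls : List (Word A × Word A × Word A)) (q' : Bool),
      (mySpl a b).Path true ls q' →
      q' = true ∧ ∃ n, ls = List.replicate n (([],[a],[a]) : Word A × Word A × Word A) := by
  intro ls
  induction ls with
  | nil =>
      intro q' h
      obtain ⟨t, ht⟩ : ∃ t : (mySpl a b).Q, t = true := ⟨_, rfl⟩
      obtain ⟨u, hu⟩ : ∃ u : (mySpl a b).Q, u = q' := ⟨_, rfl⟩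
      rw [← ht, ← hu] at h
      cases h; subst ht hu; exact ⟨rfl, 0, rfl⟩
  | cons l ls ih =>
    intro q' h
    obtain ⟨t, ht⟩ : ∃ t : (mySpl a b).Q, t = true := ⟨_, rfl⟩
    obtain ⟨u, hu⟩ : ∃ u : (mySpl a b).Q, u = q' := ⟨_, rfl⟩
    rw [← ht, ← hu] at h
    cases h with
    | cons hE hP =>
      subst ht; subst u
      rcases hE with ⟨hq, _, _⟩ | ⟨_, rfl, rfl⟩
      · exact absurd hq (by simp)
      · obtain ⟨hq', n, rfl⟩ := ih q' hP
        exact ⟨hq', n + 1, by simp [List.replicate_succ]⟩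

lemma path_rep {A : Type} (a b : A) (n : ℕ) :
    (mySpl a b).Path true (List.replicate n (([],[a],[a]) : Word A × Word A × Word A)) true := by
  induction n with
  | zero => exact Spliffer.Path.nil (S := mySpl a b) true
  | succ n ih =>
    rw [List.replicate_succ]
    exact Spliffer.Path.cons (Or.inr ⟨rfl, rfl, rfl⟩) ih

lemma mySpl_behavior {A : Type} (a b : A) : (mySpl a b).behavior = setLb a b := by
  ext m
  constructor
  · rintro ⟨q, hqI, q', hq'T, ls, hP, rfl⟩
    have hq : q = false := hqI
    have hq' : q' = true := hq'T
    subst hq; subst hq'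
    obtain ⟨t, ht⟩ : ∃ t : (mySpl a b).Q, t = false := ⟨_, rfl⟩
    obtain ⟨u, hu⟩ : ∃ u : (mySpl a b).Q, u = true := ⟨_, rfl⟩
    rw [← ht, ← hu] at hP
    cases hP with
    | nil => exact absurd (ht.symm.trans hu) Bool.false_ne_true
    | cons hE hP =>
      subst ht hu
      rcases hE with ⟨_, rfl, rfl⟩ | ⟨hq, _, _⟩
      · obtain ⟨_, n, rfl⟩ := path_from_true a b _ _ hP
        exact ⟨n, (prodRep a b n)⟩
      · exact absurd hq (by simp)
  · rintro ⟨n, rfl⟩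
    refine ⟨false, rfl, true, rfl, ([b],[],[b]) :: List.replicate n ([],[a],[a]), ?_, prodRep a b n⟩
    exact Spliffer.Path.cons (Or.inl ⟨rfl, rfl, rfl⟩) (path_rep a b n)

lemma mySpl_det {A : Type} (a b : A) : (mySpl a b).Deterministic := by
  refine ⟨⟨false, rfl, fun y hy => hy⟩, ?_, ?_⟩
  · rintro q l₁ q₁ l₂ q₂ (⟨rfl, rfl, rfl⟩ | ⟨rfl, rfl, rfl⟩) (⟨h, rfl, rfl⟩ | ⟨h, rfl, rfl⟩) _ <;>
      simp_all <;> rfl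
  · rintro q l₁ q₁ l₂ q₂ (⟨rfl, rfl, rfl⟩ | ⟨rfl, rfl, rfl⟩) (⟨h, rfl, rfl⟩ | ⟨h, rfl, rfl⟩) <;>
      simp_all

lemma det_unique {A : Type} (S : Spliffer A) (hd : S.Deterministic) :
    ∀ (ls₁ : List (Word A × Word A × Word A)) {q q₁ q₂ ls₂},
      S.Path q ls₁ q₁ → S.Path q ls₂ q₂ →
      (ls₁.map fun l => l.2.2).flatten = (ls₂.map fun l => l.2.2).flatten → ls₁ = ls₂ := by
  intro ls₁
  induction ls₁ with
  | nil =>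
    intro q q₁ q₂ ls₂ _ h₂ hw
    cases h₂ with
    | nil => rfl
    | cons hE _ =>
      obtain ⟨x, hx | hx⟩ := S.labels_mem hE <;> subst hx <;> simp at hw
  | cons l₁ ls₁ ih =>
    intro q q₁ q₂ ls₂ h₁ h₂ hw
    cases h₁ with
    | cons hE₁ hP₁ =>
      cases h₂ with
      | nil =>
        obtain ⟨x, hx | hx⟩ := S.labels_mem hE₁ <;> subst hx <;> simp at hw
      | cons hE₂ hP₂ =>
        rename_i q₂mid l₂ ls₂
        have e₁ : ∃ x, l₁.2.2 = [x] := by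
          obtain ⟨x, hx | hx⟩ := S.labels_mem hE₁ <;> exact ⟨x, by rw [hx]⟩
        have e₂ : ∃ x, l₂.2.2 = [x] := by
          obtain ⟨x, hx | hx⟩ := S.labels_mem hE₂ <;> exact ⟨x, by rw [hx]⟩
        obtain ⟨x₁, hx₁⟩ := e₁
        obtain ⟨x₂, hx₂⟩ := e₂
        simp only [List.map_cons, List.flatten_cons, hx₁, hx₂,
          List.singleton_append] at hw
        injection hw with hx hw
        subst hx
        obtain ⟨hl, hq⟩ := hd.2.1 hE₁ hE₂ (by rw [hx₁, hx₂])
        subst hq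
        rw [hl, ih hP₁ hP₂ hw]
    
theorem drat_not_closed_under_complement {A : Type} (a b : A) (hab : a ≠ b)
    (hA : ∀ x : A, x = a ∨ x = b) :
    (∃ S : Spliffer A, S.Deterministic ∧ S.behavior = setLb a b) ∧
    ¬ ∃ S : Spliffer A, S.Deterministic ∧ S.behavior = shuffleU A \ setLb a b := by
  constructor
  · exact ⟨mySpl a b, mySpl_det a b, mySpl_behavior a b⟩
  · rintro ⟨S, hd, hb⟩
    -- two elements of U \ L with the same third component
    have hm₁ : (([], [b,a], [b,a]) : Word A × Word A × Word A) ∈ shuffleU A \ setLb a b := by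
      constructor
      · refine ⟨[([],[b],[b]), ([],[a],[a])], ?_, by simp [prodTriple]⟩
        rintro l hl
        simp only [List.mem_cons, List.not_mem_nil, or_false] at hl
        rcases hl with rfl | rfl
        · exact ⟨b, Or.inr rfl⟩
        · exact ⟨a, Or.inr rfl⟩
      · rintro ⟨n, h⟩
        exact absurd (congrArg Prod.fst h) (by simp)
    have hm₂ : (([b,a], [], [b,a]) : Word A × Word A × Word A) ∈ shuffleU A \ setLb a b := by
      constructor
      · refine ⟨[([b],[],[b]), ([a],[],[a])], ?_, by simp [prodTriple]⟩
        rintro l hl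
        simp only [List.mem_cons, List.not_mem_nil, or_false] at hl
        rcases hl with rfl | rfl
        · exact ⟨b, Or.inl rfl⟩
        · exact ⟨a, Or.inl rfl⟩
      · rintro ⟨n, h⟩
        exact absurd (congrArg Prod.fst h) (by simp)
    rw [← hb] at hm₁ hm₂
    obtain ⟨q₁, hq₁, q₁', _, ls₁, hP₁, hpt₁⟩ := hm₁
    obtain ⟨q₂, hq₂, q₂', _, ls₂, hP₂, hpt₂⟩ := hm₂
    obtain ⟨i, _, hiu⟩ := hd.1
    have hq : q₁ = q₂ := (hiu _ hq₁).trans (hiu _ hq₂).symm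
    subst hq
    have hls : ls₁ = ls₂ := by
      apply det_unique S hd ls₁ hP₁ hP₂
      have h₁ := congrArg (fun m => m.2.2) hpt₁
      have h₂ := congrArg (fun m => m.2.2) hpt₂
      simp only [prodTriple] at h₁ h₂
      rw [h₁, h₂]
    rw [hls, hpt₂] at hpt₁
    have := congrArg Prod.fst hpt₁
    simp at this
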